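/- Let V be a finite-dimensional real symplectic vector space, K a subspace, and R, N symplectic vector spaces such that V is the symplectic direct sum R ⊕ (K ⊕ K*) ⊕ N, where K ⊕ K* carries the canonical symplectic pairing. If N⊥ is any linear complement to N in K* ⊕ N, then R ⊕ K ⊕ N⊥ is a symplectic subspace of V. -/
import Mathlib


open Module

/-- Let `V = R ⊕ (K ⊕ K*) ⊕ N` be a symplectic direct sum, where `K ⊕ K*`
carries the canonical symplectic pairing and `R`, `N` are symplectic.  If `N⊥` is any linear
complement to `N` inside `K* ⊕ N`, then `R ⊕ K ⊕ N⊥` is a symplectic subspace of `V`. -/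
theorem symplectic_complement_is_symplectic_subspace
    (R K N : Type*)
    [AddCommGroup R] [Module ℝ R] [AddCommGroup K] [Module ℝ K]
    [AddCommGroup N] [Module ℝ N]
    [FiniteDimensional ℝ R] [FiniteDimensional ℝ K] [FiniteDimensional ℝ N]
    (ωR : R →ₗ[ℝ] R →ₗ[ℝ] ℝ) (ωN : N →ₗ[ℝ] N →ₗ[ℝ] ℝ)
    (hRalt : ∀ r, ωR r r = 0) (hNalt : ∀ n, ωN n n = 0)
    (hRnd : ∀ r, (∀ r', ωR r r' = 0) → r = 0)
    (hNnd : ∀ n, (∀ n', ωN n n' = 0) → n = 0)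
    -- the symplectic form on V = R × (K × K*) × N
    (ω : (R × (K × Dual ℝ K) × N) → (R × (K × Dual ℝ K) × N) → ℝ)
    (hω : ∀ v w : R × (K × Dual ℝ K) × N,
      ω v w = ωR v.1 w.1 + (w.2.1.2 v.2.1.1 - v.2.1.2 w.2.1.1) + ωN v.2.2 w.2.2)
    -- N⊥ : a subspace of K* ⊕ N complementary to N
    (Nperp : Submodule ℝ (R × (K × Dual ℝ K) × N))
    (hNperpSub : ∀ p ∈ Nperp, p.1 = 0 ∧ p.2.1.1 = 0)
    (hNperpInd : ∀ p ∈ Nperp, p.2.1.2 = 0 → p = 0)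
    (hNperpSpan : ∀ v : R × (K × Dual ℝ K) × N, v.1 = 0 → v.2.1.1 = 0 →
      ∃ p ∈ Nperp, ∃ n : N, v = p + (0, (0, 0), n)) :
    -- R ⊕ K ⊕ N⊥ is a symplectic subspace: the restriction of ω to it is nondegenerate
    ∀ v : R × (K × Dual ℝ K) × N,
      (∃ p ∈ Nperp, (v - p).2.1.2 = 0 ∧ (v - p).2.2 = 0) →
      (∀ w : R × (K × Dual ℝ K) × N,
        (∃ q ∈ Nperp, (w - q).2.1.2 = 0 ∧ (w - q).2.2 = 0) → ω v w = 0) →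
      v = 0 := by
  rintro v ⟨p, hp, hf, hn⟩ hω0
  obtain ⟨hp1, hp2⟩ := hNperpSub p hp
  -- Step 1: v.1 = 0
  have hr : v.1 = 0 := by
    apply hRnd
    intro r'
    have h := hω0 (r', (0, 0), 0) ⟨0, Nperp.zero_mem, by simp, by simp⟩
    rw [hω] at h
    simpa using h
  -- Step 2: v.2.1.2 = 0
  have hfv : v.2.1.2 = 0 := by
    apply LinearMap.ext
    intro k'
    have h := hω0 (0, (k', 0), 0) ⟨0, Nperp.zero_mem, by simp, by simp⟩
    rw [hω] at h
    simp only [LinearMap.zero_apply, map_zero] at h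
    simpa using h
  -- hence p = 0, so v.2.2 = 0
  have hpf : p.2.1.2 = 0 := by
    have : (v - p).2.1.2 = v.2.1.2 - p.2.1.2 := rfl
    rw [this, hfv, zero_sub, neg_eq_zero] at hf
    exact hf.symm ▸ rfl
  have hp0 : p = 0 := hNperpInd p hp hpf
  have hnv : v.2.2 = 0 := by
    have : (v - p).2.2 = v.2.2 - p.2.2 := rfl
    rw [this, hp0] at hn
    simpa using hn
  -- Step 3: v.2.1.1 = 0
  have hk : v.2.1.1 = 0 := by
    rw [← Module.forall_dual_apply_eq_zero_iff ℝ]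
    intro g
    obtain ⟨q, hq, n, hqn⟩ := hNperpSpan (0, (0, g), 0) rfl rfl
    have hqf : q.2.1.2 = g := by
      have := congrArg (fun x => x.2.1.2) hqn
      simpa using this.symm
    have h := hω0 q ⟨q, hq, by simp, by simp⟩
    rw [hω, hr, hfv, hnv, hqf] at h
    simpa using h
  have : v = (v.1, (v.2.1.1, v.2.1.2), v.2.2) := rfl
  rw [this, hr, hfv, hnv, hk]
  rfl
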